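/- Let d ≥ 2, r ∈ (0,1], M ≥ 0, and let φ : ℝ^d × ℝ^d → ℝ be continuous with |φ(x,v)| ≤ M for all (x,v). Fix t ≥ 0 and (x,v) ∈ ℝ^d × ℝ^d. For ω₁,…,ω_k ∈ S^{d−1} define the forward velocities v^{(0)} = v and v^{(l)} = v^{(l−1)} − (1+r)⟨v^{(l−1)}, ω_l⟩ω_l, and use the convention t₀ = t. Then the series ψ(t,x,v) := exp(−C_d‖v‖t)·φ(x + t·v, v) + Σ_{k≥1} ∫_{0}^{t} ∫_{S^{d−1}} ⋯ ∫_{0}^{t_{k−1}} ∫_{S^{d−1}} exp(Σ_{j=1}^{k} C_d‖v^{(j−1)}‖(t_j − t_{j−1}) − C_d‖v^{(k)}‖t_k) · (∏_{l=1}^{k} |⟨v^{(l−1)}, ω_l⟩|) · φ(x + Σ_{m=1}^{k} (t_{m−1} − t_m)v^{(m−1)} + t_k v^{(k)}, v^{(k)}) dσ(ω_k) dt_k ⋯ dσ(ω₁) dt₁ converges absolutely, and the resulting value satisfies |ψ(t,x,v)| ≤ M·exp(C_d‖v‖t). -/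

import Mathlib

open MeasureTheory Metric
open scoped RealInnerProductSpace ENNReal
open scoped Pointwise

noncomputable section

/-- The surface measure on the unit sphere of `ℝ^d`. -/
def sphereSurfaceMeasure (d : ℕ) :
    Measure (sphere (0 : EuclideanSpace ℝ (Fin d)) 1) :=
  (volume : Measure (EuclideanSpace ℝ (Fin d))).toSphere

/-- The dimensional constant `C_d = ∫_{S^{d−1}} |⟪e₁,ω⟫| dσ(ω)`. -/
def dimConst (d : ℕ) : ℝ :=
  ∫ ω : sphere (0 : EuclideanSpace ℝ (Fin d)) 1,
    |⟪(if h : 0 < d then EuclideanSpace.single (⟨0, h⟩ : Fin d) (1 : ℝ) else 0),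
      (ω : EuclideanSpace ℝ (Fin d))⟫| ∂ sphereSurfaceMeasure d

/-- The forward post-collisional velocities: `v^{(0)} = v` and
`v^{(l+1)} = v^{(l)} − (1+r)⟪v^{(l)}, ω_l⟫ ω_l` (with `ω` indexed from `0`). -/
def forwardVelocity (d : ℕ) (r : ℝ) (v : EuclideanSpace ℝ (Fin d))
    (ω : ℕ → EuclideanSpace ℝ (Fin d)) : ℕ → EuclideanSpace ℝ (Fin d)
  | 0 => v
  | l + 1 => forwardVelocity d r v ω l
      - ((1 + r) * ⟪forwardVelocity d r v ω l, ω l⟫) • ω l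

/-- Extension of a finite family of angular parameters on the sphere to a function on `ℕ`. -/
def extendAngles (d k : ℕ) (ω : Fin k → sphere (0 : EuclideanSpace ℝ (Fin d)) 1) :
    ℕ → EuclideanSpace ℝ (Fin d) :=
  fun n => if h : n < k then (ω ⟨n, h⟩ : EuclideanSpace ℝ (Fin d)) else 0

/-- Extension of the collision times `t₁ ≥ ⋯ ≥ t_k` (zero-indexed) to a function on `ℕ` with
the convention `t₀ = t`. -/
def extendTimes (t : ℝ) {k : ℕ} (τ : Fin k → ℝ) : ℕ → ℝ :=
  fun j => if h : 1 ≤ j ∧ j - 1 < k then τ ⟨j - 1, h.2⟩ else t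

/-- The simplex `0 ≤ t_k ≤ t_{k−1} ≤ ⋯ ≤ t₁ ≤ t` of ordered collision times. -/
def collisionSimplex (k : ℕ) (t : ℝ) : Set (Fin k → ℝ) :=
  {τ | (∀ i : Fin k, 0 ≤ τ i ∧ τ i ≤ t) ∧ ∀ i j : Fin k, i ≤ j → τ j ≤ τ i}

/-- The integrand of the `k`-th term of the series representation of the solution of the
adjoint equation of the linear inelastic Boltzmann equation. -/
def adjointIntegrand (d k : ℕ) (r : ℝ)
    (φ : EuclideanSpace ℝ (Fin d) × EuclideanSpace ℝ (Fin d) → ℝ)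
    (t : ℝ) (x v : EuclideanSpace ℝ (Fin d))
    (q : (Fin k → ℝ) × (Fin k → sphere (0 : EuclideanSpace ℝ (Fin d)) 1)) : ℝ :=
  Real.exp ((∑ j : Fin k, dimConst d *
        ‖forwardVelocity d r v (extendAngles d k q.2) (j : ℕ)‖ *
        (extendTimes t q.1 ((j : ℕ) + 1) - extendTimes t q.1 (j : ℕ)))
      - dimConst d * ‖forwardVelocity d r v (extendAngles d k q.2) k‖
          * extendTimes t q.1 k)
    * (∏ l : Fin k,
        |⟪forwardVelocity d r v (extendAngles d k q.2) (l : ℕ),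
            extendAngles d k q.2 (l : ℕ)⟫|)
    * φ (x + (∑ m : Fin k,
          (extendTimes t q.1 (m : ℕ) - extendTimes t q.1 ((m : ℕ) + 1)) •
            forwardVelocity d r v (extendAngles d k q.2) (m : ℕ))
        + extendTimes t q.1 k • forwardVelocity d r v (extendAngles d k q.2) k,
      forwardVelocity d r v (extendAngles d k q.2) k)

/-- The measure on the domain of the `k`-fold collision integral: Lebesgue measure on the
collision times times the `k`-fold product of the surface measure on the sphere. -/
def adjointMeasure (d k : ℕ) :
    Measure ((Fin k → ℝ) × (Fin k → sphere (0 : EuclideanSpace ℝ (Fin d)) 1)) :=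
  (volume : Measure (Fin k → ℝ)).prod (Measure.pi fun _ : Fin k => sphereSurfaceMeasure d)

/-- The domain of the `k`-fold collision integral: the simplex of ordered collision times
times the whole `k`-fold product of the sphere. -/
def adjointDomain (d k : ℕ) (t : ℝ) :
    Set ((Fin k → ℝ) × (Fin k → sphere (0 : EuclideanSpace ℝ (Fin d)) 1)) :=
  (collisionSimplex k t) ×ˢ (Set.univ : Set (Fin k → sphere (0 : EuclideanSpace ℝ (Fin d)) 1))

variable {d : ℕ}

local notation "E" => EuclideanSpace ℝ (Fin d)
local notation "S" => sphere (0 : EuclideanSpace ℝ (Fin d)) 1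

instance : IsFiniteMeasure (sphereSurfaceMeasure d) := by
  unfold sphereSurfaceMeasure; infer_instance

/-- map on the sphere induced by a linear isometry -/
def sphMap (e : E ≃ₗᵢ[ℝ] E) : S → S := fun ω =>
  ⟨e ω, by
    have : ‖e (ω : E)‖ = ‖(ω : E)‖ := e.norm_map _
    have h1 : ‖(ω : E)‖ = 1 := by
      simpa [mem_sphere_iff_norm] using ω.2
    simp [mem_sphere_iff_norm, this, h1]⟩

lemma continuous_sphMap (e : E ≃ₗᵢ[ℝ] E) : Continuous (sphMap e) :=
  Continuous.subtype_mk (e.continuous.comp continuous_subtype_val) _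

lemma measurePreserving_sphMap (e : E ≃ₗᵢ[ℝ] E) :
    MeasurePreserving (sphMap e) (sphereSurfaceMeasure d) (sphereSurfaceMeasure d) := by
  refine ⟨(continuous_sphMap e).measurable, ?_⟩
  refine Measure.ext fun s hs => ?_
  rw [Measure.map_apply (continuous_sphMap e).measurable hs]
  unfold sphereSurfaceMeasure
  rw [Measure.toSphere_apply' _ ((continuous_sphMap e).measurable hs),
    Measure.toSphere_apply' _ hs]
  congr 1
  have h1 : (Subtype.val '' (sphMap e ⁻¹' s)) = ⇑e ⁻¹' (Subtype.val '' s) := by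
    ext z
    constructor
    · rintro ⟨ω, hω, rfl⟩
      exact ⟨sphMap e ω, hω, rfl⟩
    · rintro hz
      obtain ⟨ω, hω, hωz⟩ := hz
      have hz1 : ‖z‖ = 1 := by
        have : ‖e z‖ = 1 := by
          rw [← hωz]
          simpa [mem_sphere_iff_norm] using ω.2
        rwa [e.norm_map] at this
      refine ⟨⟨z, by simp [mem_sphere_iff_norm, hz1]⟩, ?_, rfl⟩
      show sphMap e _ ∈ s
      have : sphMap e ⟨z, by simp [mem_sphere_iff_norm, hz1]⟩ = ω := by
        apply Subtype.ext
        exact hωz.symm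
      rw [this]; exact hω
  rw [h1]
  have h2 : Set.Ioo (0:ℝ) 1 • (⇑e ⁻¹' (Subtype.val '' s)) =
      ⇑e ⁻¹' (Set.Ioo (0:ℝ) 1 • (Subtype.val '' s)) := by
    ext z
    simp only [Set.mem_smul, Set.mem_preimage]
    constructor
    · rintro ⟨c, hc, y, hy, rfl⟩
      exact ⟨c, hc, e y, hy, (e.map_smul c y).symm⟩
    · rintro ⟨c, hc, y, hy, hz⟩
      refine ⟨c, hc, e.symm y, by simpa using hy, ?_⟩
      apply e.injective
      rw [e.map_smul, e.apply_symm_apply, hz]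
  rw [h2]
  have hm : Measure.map (e.toMeasurableEquiv) (volume : Measure E) = volume := by
    have h := e.measurePreserving.map_eq
    simpa [LinearIsometryEquiv.coe_toMeasurableEquiv] using h
  conv_rhs => rw [← hm]
  rw [MeasurableEquiv.map_apply]
  rfl

lemma dimConst_nonneg : 0 ≤ dimConst d :=
  integral_nonneg fun _ => abs_nonneg _

lemma continuous_inner_sphere (w : E) :
    Continuous (fun ω : S => |⟪w, (ω : E)⟫|) :=
  (Continuous.inner continuous_const continuous_subtype_val).abs

lemma lintegral_inner_sphere (hd : 0 < d) (w : E) :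
    ∫⁻ ω : S, ENNReal.ofReal |⟪w, (ω : E)⟫| ∂ sphereSurfaceMeasure d
      = ENNReal.ofReal (dimConst d * ‖w‖) := by
  set u₁ : E := EuclideanSpace.single (⟨0, hd⟩ : Fin d) (1:ℝ) with hu₁def
  have hu₁ : ‖u₁‖ = 1 := by simp [hu₁def, EuclideanSpace.norm_single]
  have hC : dimConst d = ∫ ω : S, |⟪u₁, (ω : E)⟫| ∂ sphereSurfaceMeasure d := by
    unfold dimConst; rw [dif_pos hd]
  have hCof : ∫⁻ ω : S, ENNReal.ofReal |⟪u₁, (ω : E)⟫| ∂ sphereSurfaceMeasure d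
      = ENNReal.ofReal (dimConst d) := by
    rw [hC]
    rw [← ofReal_integral_eq_lintegral_ofReal]
    · refine Integrable.mono' (integrable_const 1)
        (continuous_inner_sphere u₁).aestronglyMeasurable
        (Filter.Eventually.of_forall fun ω => ?_)
      have h1 : ‖(ω : E)‖ = 1 := by simpa [mem_sphere_iff_norm] using ω.2
      calc ‖|⟪u₁, (ω : E)⟫|‖ = |⟪u₁, (ω : E)⟫| := by
            rw [Real.norm_eq_abs, abs_abs]
        _ ≤ ‖u₁‖ * ‖(ω : E)‖ := abs_real_inner_le_norm _ _
        _ = 1 := by rw [hu₁, h1, mul_one]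
    · exact Filter.Eventually.of_forall fun ω => abs_nonneg _
  have hI : ∀ u : E, ‖u‖ = 1 →
      ∫⁻ ω : S, ENNReal.ofReal |⟪u, (ω : E)⟫| ∂ sphereSurfaceMeasure d
        = ENNReal.ofReal (dimConst d) := by
    intro u hu
    set e := Submodule.reflection (ℝ ∙ (u₁ - u))ᗮ with he_def
    have he : e u₁ = u := Submodule.reflection_sub (by rw [hu₁, hu])
    have hmeas : Measurable (fun ω : S => ENNReal.ofReal |⟪u, (ω : E)⟫|) :=
      (ENNReal.continuous_ofReal.comp (continuous_inner_sphere u)).measurable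
    rw [← (measurePreserving_sphMap e).lintegral_comp hmeas]
    have : ∀ ω : S, |⟪u, ((sphMap e ω : S) : E)⟫| = |⟪u₁, (ω : E)⟫| := by
      intro ω
      have : ((sphMap e ω : S) : E) = e (ω : E) := rfl
      rw [this, ← he, LinearIsometryEquiv.inner_map_map]
    simp only [this]
    exact hCof
  rcases eq_or_ne w 0 with rfl | hw
  · simp
  · set u : E := ‖w‖⁻¹ • w with hu_def
    have hu : ‖u‖ = 1 := norm_smul_inv_norm hw
    have hwu : ∀ ω : S, |⟪w, (ω : E)⟫| = ‖w‖ * |⟪u, (ω : E)⟫| := by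
      intro ω
      have hww : w = ‖w‖ • u := by
        rw [hu_def, smul_smul, mul_inv_cancel₀ (norm_ne_zero_iff.2 hw), one_smul]
      conv_lhs => rw [hww]
      rw [real_inner_smul_left, abs_mul, abs_norm]
    simp only [hwu]
    have hmeas : Measurable (fun ω : S => ENNReal.ofReal |⟪u, (ω : E)⟫|) :=
      (ENNReal.continuous_ofReal.comp (continuous_inner_sphere u)).measurable
    calc ∫⁻ ω : S, ENNReal.ofReal (‖w‖ * |⟪u, (ω : E)⟫|) ∂ sphereSurfaceMeasure d
        = ∫⁻ ω : S, ENNReal.ofReal ‖w‖ * ENNReal.ofReal |⟪u, (ω : E)⟫|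
            ∂ sphereSurfaceMeasure d := by
          simp only [ENNReal.ofReal_mul (norm_nonneg w)]
      _ = ENNReal.ofReal ‖w‖ * ∫⁻ ω : S, ENNReal.ofReal |⟪u, (ω : E)⟫|
            ∂ sphereSurfaceMeasure d := lintegral_const_mul _ hmeas
      _ = ENNReal.ofReal ‖w‖ * ENNReal.ofReal (dimConst d) := by rw [hI u hu]
      _ = ENNReal.ofReal (dimConst d * ‖w‖) := by
          rw [← ENNReal.ofReal_mul (norm_nonneg w), mul_comm]

variable {r : ℝ} {v : EuclideanSpace ℝ (Fin d)}

lemma norm_collide (hr : r ∈ Set.Ioc (0:ℝ) 1) (w ω : E) (hω : ‖ω‖ = 1 ∨ ω = 0) :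
    ‖w - ((1 + r) * ⟪w, ω⟫) • ω‖ ≤ ‖w‖ := by
  rcases hω with hω | rfl
  · set c : ℝ := (1 + r) * ⟪w, ω⟫ with hc
    have hsq : ‖w - c • ω‖^2 = ‖w‖^2 - 2*(c*⟪w, ω⟫) + c^2 := by
      rw [norm_sub_sq_real, real_inner_smul_right, norm_smul, hω]
      simp [mul_pow]
    have h2 : ‖w - c • ω‖^2 ≤ ‖w‖^2 := by
      rw [hsq, hc]
      nlinarith [sq_nonneg ⟪w, ω⟫, hr.1, hr.2, sq_nonneg ((1+r)*⟪w, ω⟫)]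
    exact (pow_le_pow_iff_left₀ (norm_nonneg _) (norm_nonneg _) two_ne_zero).mp h2
  · simp

lemma forward_agree {ω ω' : ℕ → E} (l : ℕ) (h : ∀ m, m < l → ω m = ω' m) :
    forwardVelocity d r v ω l = forwardVelocity d r v ω' l := by
  induction l with
  | zero => rfl
  | succ l ih =>
    have h1 := ih (fun m hm => h m (hm.trans (Nat.lt_succ_self l)))
    show forwardVelocity d r v ω l - _ = forwardVelocity d r v ω' l - _
    rw [h1, h l (Nat.lt_succ_self l)]

lemma extendAngles_norm (k : ℕ) (ω : Fin k → S) (l : ℕ) :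
    ‖extendAngles d k ω l‖ = 1 ∨ extendAngles d k ω l = 0 := by
  unfold extendAngles
  by_cases h : l < k
  · left; rw [dif_pos h]; simpa [mem_sphere_iff_norm] using (ω ⟨l, h⟩).2
  · right; rw [dif_neg h]

lemma norm_forward_le (hr : r ∈ Set.Ioc (0:ℝ) 1) (k : ℕ) (ω : Fin k → S) (l : ℕ) :
    ‖forwardVelocity d r v (extendAngles d k ω) l‖ ≤ ‖v‖ := by
  induction l with
  | zero => exact le_refl _
  | succ l ih =>
    exact le_trans (norm_collide hr _ _ (extendAngles_norm k ω l)) ih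

lemma continuous_extendAngles (k l : ℕ) :
    Continuous (fun ω : Fin k → S => extendAngles d k ω l) := by
  unfold extendAngles
  by_cases h : l < k
  · simp only [dif_pos h]
    exact continuous_subtype_val.comp (continuous_apply _)
  · simp only [dif_neg h]
    exact continuous_const

lemma continuous_forward (k l : ℕ) :
    Continuous (fun ω : Fin k → S => forwardVelocity d r v (extendAngles d k ω) l) := by
  induction l with
  | zero => exact continuous_const
  | succ l ih =>
    have hg := continuous_extendAngles (d := d) k l
    show Continuous fun ω : Fin k → S =>
      forwardVelocity d r v (extendAngles d k ω) l
        - ((1 + r) * ⟪forwardVelocity d r v (extendAngles d k ω) l, extendAngles d k ω l⟫)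
            • extendAngles d k ω l
    exact ih.sub ((continuous_const.mul (Continuous.inner (𝕜 := ℝ) ih hg)).smul hg)

lemma isClosed_collisionSimplex (k : ℕ) (t : ℝ) : IsClosed (collisionSimplex k t) := by
  have : collisionSimplex k t =
      (⋂ i : Fin k, {τ : Fin k → ℝ | 0 ≤ τ i} ∩ {τ : Fin k → ℝ | τ i ≤ t}) ∩
        ⋂ (i : Fin k) (j : Fin k) (_ : i ≤ j), {τ : Fin k → ℝ | τ j ≤ τ i} := by
    ext τ
    simp [collisionSimplex, forall_and]
  rw [this]
  refine IsClosed.inter (isClosed_iInter fun i => IsClosed.inter ?_ ?_)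
    (isClosed_iInter fun i => isClosed_iInter fun j => isClosed_iInter fun _ => ?_)
  · exact isClosed_le continuous_const (continuous_apply i)
  · exact isClosed_le (continuous_apply i) continuous_const
  · exact isClosed_le (continuous_apply j) (continuous_apply i)

lemma measurableSet_collisionSimplex (k : ℕ) (t : ℝ) :
    MeasurableSet (collisionSimplex k t) :=
  (isClosed_collisionSimplex k t).measurableSet

lemma cons_mem_collisionSimplex_iff {n : ℕ} {t a : ℝ} {rest : Fin n → ℝ} :
    Fin.cons a rest ∈ collisionSimplex (n+1) t ↔
      (0 ≤ a ∧ a ≤ t) ∧ rest ∈ collisionSimplex n a := by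
  constructor
  · rintro ⟨h1, h2⟩
    refine ⟨by simpa using h1 0, ⟨fun i => ?_, fun i j hij => ?_⟩⟩
    · refine ⟨by simpa using (h1 i.succ).1, ?_⟩
      have := h2 0 i.succ (Fin.zero_le _)
      simpa using this
    · have := h2 i.succ j.succ (by rwa [Fin.succ_le_succ_iff])
      simpa using this
  · rintro ⟨⟨ha0, hat⟩, hr1, hr2⟩
    constructor
    · intro i
      refine Fin.cases ?_ (fun i => ?_) i
      · simpa using ⟨ha0, hat⟩
      · simpa using ⟨(hr1 i).1, le_trans (hr1 i).2 hat⟩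
    · intro i j hij
      rcases Fin.eq_zero_or_eq_succ i with rfl | ⟨i', rfl⟩
      · rcases Fin.eq_zero_or_eq_succ j with rfl | ⟨j', rfl⟩
        · exact le_refl _
        · simpa using (hr1 j').2
      · rcases Fin.eq_zero_or_eq_succ j with rfl | ⟨j', rfl⟩
        · exact absurd hij (by simp [Fin.le_def])
        · have hij' : i' ≤ j' := by rwa [Fin.succ_le_succ_iff] at hij
          simpa using hr2 i' j' hij'

lemma volume_collisionSimplex_le (n : ℕ) {t : ℝ} (ht : 0 ≤ t) :
    (volume : Measure (Fin n → ℝ)) (collisionSimplex n t)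
      ≤ ENNReal.ofReal (t ^ n / n.factorial) := by
  induction n generalizing t with
  | zero =>
    have h1 : collisionSimplex 0 t = Set.univ := by
      ext τ
      simp [collisionSimplex]
    rw [h1]
    have huniv : (volume : Measure (Fin 0 → ℝ)) Set.univ = 1 := by
      rw [volume_pi, Measure.pi_univ]; simp
    rw [huniv]
    simp
  | succ n ih =>
    set e := MeasurableEquiv.piFinSuccAbove (fun _ : Fin (n+1) => ℝ) 0 with he_def
    have hmp := (MeasureTheory.volume_preserving_piFinSuccAbove (fun _ : Fin (n+1) => ℝ) 0).symm
    have hvol : (volume : Measure (Fin (n+1) → ℝ)) (collisionSimplex (n+1) t)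
        = (volume : Measure (ℝ × (Fin n → ℝ))) (e.symm ⁻¹' collisionSimplex (n+1) t) := by
      rw [← hmp.map_eq, MeasurableEquiv.map_apply]
    have hT : e.symm ⁻¹' collisionSimplex (n+1) t
        = {p : ℝ × (Fin n → ℝ) | (0 ≤ p.1 ∧ p.1 ≤ t) ∧ p.2 ∈ collisionSimplex n p.1} := by
      ext ⟨a, rest⟩
      have hsymm : e.symm (a, rest) = Fin.cons a rest := by
        show (MeasurableEquiv.piFinSuccAbove (fun _ : Fin (n+1) => ℝ) 0).symm (a, rest) = _
        simp [MeasurableEquiv.piFinSuccAbove, Fin.insertNth_zero]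
        rfl
      simp only [Set.mem_preimage, hsymm, Set.mem_setOf_eq]
      exact cons_mem_collisionSimplex_iff
    have hTmeas : MeasurableSet (e.symm ⁻¹' collisionSimplex (n+1) t) :=
      e.symm.measurable (measurableSet_collisionSimplex _ _)
    rw [hvol]
    have hprod : (volume : Measure (ℝ × (Fin n → ℝ)))
        = (volume : Measure ℝ).prod (volume : Measure (Fin n → ℝ)) := rfl
    rw [hprod, Measure.prod_apply hTmeas]
    have hslice : ∀ a : ℝ, (volume : Measure (Fin n → ℝ))
        (Prod.mk a ⁻¹' (e.symm ⁻¹' collisionSimplex (n+1) t))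
        ≤ Set.indicator (Set.Icc (0:ℝ) t) (fun a => ENNReal.ofReal (a ^ n / n.factorial)) a := by
      intro a
      by_cases ha : a ∈ Set.Icc (0:ℝ) t
      · rw [Set.indicator_of_mem ha]
        refine le_trans (measure_mono ?_) (ih ha.1)
        intro rest hrest
        rw [Set.mem_preimage, hT] at hrest
        exact hrest.2
      · rw [Set.indicator_of_notMem ha]
        have : Prod.mk a ⁻¹' (e.symm ⁻¹' collisionSimplex (n+1) t) = ∅ := by
          ext rest
          simp only [Set.mem_preimage, hT, Set.mem_setOf_eq, Set.mem_empty_iff_false,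
            iff_false]
          rintro ⟨⟨h1, h2⟩, -⟩
          exact ha ⟨h1, h2⟩
        rw [this]
        simp
    refine le_trans (lintegral_mono hslice) ?_
    rw [lintegral_indicator measurableSet_Icc]
    have hint : IntegrableOn (fun a : ℝ => a ^ n / n.factorial) (Set.Icc (0:ℝ) t) volume :=
      ((continuous_pow n).div_const _).integrableOn_Icc
    rw [← ofReal_integral_eq_lintegral_ofReal hint ?_]
    · have : ∫ a in Set.Icc (0:ℝ) t, a ^ n / n.factorial
          = t ^ (n+1) / (n+1).factorial := by
        rw [integral_div, MeasureTheory.integral_Icc_eq_integral_Ioc,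
          ← intervalIntegral.integral_of_le ht, integral_pow]
        rw [Nat.factorial_succ]
        push_cast
        field_simp
        simp
      rw [this]
    · filter_upwards [ae_restrict_mem measurableSet_Icc] with a ha
      exact div_nonneg (pow_nonneg ha.1 n) (Nat.cast_nonneg _)

lemma measurable_sphProd (n : ℕ) :
    Measurable (fun ω : Fin n → S => ∏ l : Fin n,
      ENNReal.ofReal |⟪forwardVelocity d r v (extendAngles d n ω) (l : ℕ),
        extendAngles d n ω (l : ℕ)⟫|) :=
  Finset.measurable_prod _ fun l _ =>
    (ENNReal.continuous_ofReal.comp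
      (((continuous_forward (k := n) (l : ℕ)).inner (continuous_extendAngles n l)).abs)).measurable

lemma extendAngles_snoc_lt {n : ℕ} (g : Fin n → S) (x : S) {m : ℕ} (hm : m < n) :
    extendAngles d (n+1) (Fin.snoc g x) m = extendAngles d n g m := by
  unfold extendAngles
  rw [dif_pos (hm.trans (Nat.lt_succ_self n)), dif_pos hm]
  have h1 : (⟨m, hm.trans (Nat.lt_succ_self n)⟩ : Fin (n+1)) = Fin.castSucc ⟨m, hm⟩ := rfl
  rw [h1, Fin.snoc_castSucc]

lemma extendAngles_snoc_last {n : ℕ} (g : Fin n → S) (x : S) :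
    extendAngles d (n+1) (Fin.snoc g x) n = (x : E) := by
  unfold extendAngles
  rw [dif_pos (Nat.lt_succ_self n)]
  have h1 : (⟨n, Nat.lt_succ_self n⟩ : Fin (n+1)) = Fin.last n := rfl
  rw [h1, Fin.snoc_last]

lemma forward_snoc {n : ℕ} (g : Fin n → S) (x : S) {l : ℕ} (hl : l ≤ n) :
    forwardVelocity d r v (extendAngles d (n+1) (Fin.snoc g x)) l
      = forwardVelocity d r v (extendAngles d n g) l :=
  forward_agree l fun m hm => extendAngles_snoc_lt g x (lt_of_lt_of_le hm hl)

lemma sphere_prod_lintegral_le (hd : 0 < d) (hr : r ∈ Set.Ioc (0:ℝ) 1) (n : ℕ) :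
    ∫⁻ ω : Fin n → S, (∏ l : Fin n,
        ENNReal.ofReal |⟪forwardVelocity d r v (extendAngles d n ω) (l : ℕ),
          extendAngles d n ω (l : ℕ)⟫|)
      ∂ (Measure.pi fun _ : Fin n => sphereSurfaceMeasure d)
      ≤ (ENNReal.ofReal (dimConst d * ‖v‖)) ^ n := by
  induction n with
  | zero =>
    simp only [Finset.univ_eq_empty, Finset.prod_empty]
    rw [lintegral_one, Measure.pi_univ]
    simp
  | succ n ih =>
    set σ := sphereSurfaceMeasure d
    set c := ENNReal.ofReal (dimConst d * ‖v‖) with hc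
    set e := MeasurableEquiv.piFinSuccAbove (fun _ : Fin (n+1) => S) (Fin.last n) with he
    have hmp := measurePreserving_piFinSuccAbove (fun _ : Fin (n+1) => (σ : Measure S))
      (Fin.last n)
    rw [← he] at hmp
    set F : (Fin (n+1) → S) → ℝ≥0∞ := fun ω => ∏ l : Fin (n+1),
      ENNReal.ofReal |⟪forwardVelocity d r v (extendAngles d (n+1) ω) (l : ℕ),
        extendAngles d (n+1) ω (l : ℕ)⟫| with hF
    set G : (Fin n → S) → ℝ≥0∞ := fun g => ∏ l : Fin n,
      ENNReal.ofReal |⟪forwardVelocity d r v (extendAngles d n g) (l : ℕ),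
        extendAngles d n g (l : ℕ)⟫| with hG
    have hFe : ∀ x : S, ∀ g : Fin n → S, F (e.symm (x, g))
        = G g * ENNReal.ofReal |⟪forwardVelocity d r v (extendAngles d n g) n, (x : E)⟫| := by
      intro x g
      have hsymm : e.symm (x, g) = Fin.snoc g x := by
        show (MeasurableEquiv.piFinSuccAbove (fun _ : Fin (n+1) => S) (Fin.last n)).symm (x, g) = _
        show (MeasurableEquiv.piFinSuccAbove (fun _ : Fin (n+1) => S) (Fin.last n)).symm.toFun
          (x, g) = _
        simp [MeasurableEquiv.piFinSuccAbove, Fin.insertNth_last', Fin.snocEquiv]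
      rw [hsymm, hF]
      simp only [Fin.prod_univ_castSucc]
      congr 1
      · rw [hG]
        refine Finset.prod_congr rfl fun l _ => ?_
        have h1 : ((Fin.castSucc l : Fin (n+1)) : ℕ) = (l : ℕ) := rfl
        rw [h1, forward_snoc g x (le_of_lt l.2), extendAngles_snoc_lt g x l.2]
      · have h2 : ((Fin.last n : Fin (n+1)) : ℕ) = n := rfl
        rw [h2, forward_snoc g x (le_refl n), extendAngles_snoc_last g x]
    have hFmeas : Measurable F := measurable_sphProd (n+1)
    calc ∫⁻ ω, F ω ∂(Measure.pi fun _ : Fin (n+1) => σ)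
        = ∫⁻ ω, F (e.symm (e ω)) ∂(Measure.pi fun _ : Fin (n+1) => σ) :=
          lintegral_congr fun ω => by rw [MeasurableEquiv.symm_apply_apply]
      _ = ∫⁻ p : S × (Fin n → S), F (e.symm p)
            ∂((σ : Measure S).prod (Measure.pi fun _ : Fin n => σ)) :=
          hmp.lintegral_comp (hFmeas.comp e.symm.measurable)
      _ = ∫⁻ g : Fin n → S, ∫⁻ x : S, F (e.symm (x, g)) ∂σ
            ∂(Measure.pi fun _ : Fin n => σ) := by
          refine lintegral_prod_symm _ ((hFmeas.comp e.symm.measurable).aemeasurable)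
      _ ≤ ∫⁻ g : Fin n → S, G g * c ∂(Measure.pi fun _ : Fin n => σ) := by
          refine lintegral_mono fun g => ?_
          have hGne : G g ≠ ⊤ := by
            rw [hG]
            exact (ENNReal.prod_lt_top fun l _ => ENNReal.ofReal_lt_top).ne
          calc ∫⁻ x : S, F (e.symm (x, g)) ∂σ
              = ∫⁻ x : S, G g * ENNReal.ofReal
                  |⟪forwardVelocity d r v (extendAngles d n g) n, (x : E)⟫| ∂σ := by
                simp only [hFe]
            _ = G g * ∫⁻ x : S, ENNReal.ofReal
                  |⟪forwardVelocity d r v (extendAngles d n g) n, (x : E)⟫| ∂σ :=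
                lintegral_const_mul' _ _ hGne
            _ = G g * ENNReal.ofReal
                  (dimConst d * ‖forwardVelocity d r v (extendAngles d n g) n‖) := by
                rw [lintegral_inner_sphere hd]
            _ ≤ G g * c := by
                refine mul_le_mul_right (ENNReal.ofReal_le_ofReal ?_) _
                exact mul_le_mul_of_nonneg_left (norm_forward_le hr n g n) dimConst_nonneg
      _ = (∫⁻ g : Fin n → S, G g ∂(Measure.pi fun _ : Fin n => σ)) * c :=
          lintegral_mul_const _ (measurable_sphProd n)
      _ ≤ c ^ n * c := mul_le_mul_left ih _
      _ = c ^ (n + 1) := (pow_succ c n).symm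

lemma extendTimes_zero (t : ℝ) {k : ℕ} (τ : Fin k → ℝ) : extendTimes t τ 0 = t := by
  unfold extendTimes
  rw [dif_neg (by omega)]

lemma extendTimes_succ (t : ℝ) {k : ℕ} (τ : Fin k → ℝ) {j : ℕ} (hj : j < k) :
    extendTimes t τ (j + 1) = τ ⟨j, hj⟩ := by
  unfold extendTimes
  rw [dif_pos ⟨by omega, by simpa using hj⟩]
  exact congrArg τ (Fin.ext (by simp))

variable {t M : ℝ} {x : EuclideanSpace ℝ (Fin d)}
  {φ : EuclideanSpace ℝ (Fin d) × EuclideanSpace ℝ (Fin d) → ℝ}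

lemma abs_adjointIntegrand_le (hr : r ∈ Set.Ioc (0:ℝ) 1) (hM : 0 ≤ M)
    (hbound : ∀ z, |φ z| ≤ M) (ht : 0 ≤ t) (n : ℕ)
    (q : (Fin n → ℝ) × (Fin n → S)) (hq : q ∈ adjointDomain d n t) :
    |adjointIntegrand d n r φ t x v q| ≤ M * ∏ l : Fin n,
      |⟪forwardVelocity d r v (extendAngles d n q.2) (l : ℕ),
        extendAngles d n q.2 (l : ℕ)⟫| := by
  obtain ⟨hq1, -⟩ := hq
  obtain ⟨hq1a, hq1b⟩ := hq1
  set T : ℕ → ℝ := extendTimes t q.1 with hT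
  have hTsucc : ∀ j : Fin n, T ((j : ℕ) + 1) - T (j : ℕ) ≤ 0 := by
    intro j
    rcases Nat.eq_zero_or_pos (j : ℕ) with hj0 | hjpos
    · rw [hj0, hT, extendTimes_succ t q.1 (hj0 ▸ j.2), extendTimes_zero]
      have := (hq1a ⟨0, hj0 ▸ j.2⟩).2
      linarith
    · obtain ⟨m, hm⟩ : ∃ m, (j : ℕ) = m + 1 := ⟨(j : ℕ) - 1, by omega⟩
      have hmk : m < n := by omega
      rw [hT, hm, extendTimes_succ t q.1 (by omega : m + 1 < n),
        extendTimes_succ t q.1 hmk]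
      have := hq1b ⟨m, hmk⟩ ⟨m + 1, by omega⟩ (by simp [Fin.le_def])
      linarith
  have hTn : 0 ≤ T n := by
    rcases Nat.eq_zero_or_pos n with rfl | hn
    · rw [hT, extendTimes_zero]; exact ht
    · obtain ⟨m, hm⟩ : ∃ m, n = m + 1 := ⟨n - 1, by omega⟩
      subst hm
      rw [hT, extendTimes_succ t q.1 (by omega : m < m + 1)]
      exact (hq1a _).1
  have hVnonneg : ∀ l : ℕ, 0 ≤ dimConst d * ‖forwardVelocity d r v (extendAngles d n q.2) l‖ :=
    fun l => mul_nonneg dimConst_nonneg (norm_nonneg _)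
  have hexp : Real.exp ((∑ j : Fin n, dimConst d *
        ‖forwardVelocity d r v (extendAngles d n q.2) (j : ℕ)‖ *
        (extendTimes t q.1 ((j : ℕ) + 1) - extendTimes t q.1 (j : ℕ)))
      - dimConst d * ‖forwardVelocity d r v (extendAngles d n q.2) n‖
          * extendTimes t q.1 n) ≤ 1 := by
    rw [Real.exp_le_one_iff]
    have h1 : (∑ j : Fin n, dimConst d *
        ‖forwardVelocity d r v (extendAngles d n q.2) (j : ℕ)‖ *
        (extendTimes t q.1 ((j : ℕ) + 1) - extendTimes t q.1 (j : ℕ))) ≤ 0 := by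
      refine Finset.sum_nonpos fun j _ => ?_
      exact mul_nonpos_of_nonneg_of_nonpos (hVnonneg (j : ℕ)) (hTsucc j)
    have h2 : 0 ≤ dimConst d * ‖forwardVelocity d r v (extendAngles d n q.2) n‖
        * extendTimes t q.1 n := mul_nonneg (hVnonneg n) hTn
    linarith
  set P : ℝ := ∏ l : Fin n,
    |⟪forwardVelocity d r v (extendAngles d n q.2) (l : ℕ),
        extendAngles d n q.2 (l : ℕ)⟫| with hP
  have hPnonneg : 0 ≤ P := Finset.prod_nonneg fun _ _ => abs_nonneg _
  unfold adjointIntegrand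
  rw [abs_mul, abs_mul, Real.abs_exp, abs_of_nonneg hPnonneg]
  refine le_trans (mul_le_mul (mul_le_mul_of_nonneg_right hexp hPnonneg) (hbound _)
    (abs_nonneg _) (by rw [one_mul]; exact hPnonneg)) (le_of_eq (by ring))

lemma continuous_adjointIntegrand (hφ : Continuous φ) (n : ℕ) :
    Continuous (adjointIntegrand d n r φ t x v) := by
  unfold adjointIntegrand
  have hT : ∀ j : ℕ, Continuous (fun q : (Fin n → ℝ) × (Fin n → S) => extendTimes t q.1 j) := by
    intro j
    unfold extendTimes
    by_cases h : 1 ≤ j ∧ j - 1 < n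
    · simp only [dif_pos h]
      exact (continuous_apply _).comp continuous_fst
    · simp only [dif_neg h]
      exact continuous_const
  have hV : ∀ l : ℕ, Continuous (fun q : (Fin n → ℝ) × (Fin n → S) =>
      forwardVelocity d r v (extendAngles d n q.2) l) :=
    fun l => (continuous_forward n l).comp continuous_snd
  have hA : ∀ l : ℕ, Continuous (fun q : (Fin n → ℝ) × (Fin n → S) =>
      extendAngles d n q.2 l) :=
    fun l => (continuous_extendAngles n l).comp continuous_snd
  refine Continuous.mul (Continuous.mul (Real.continuous_exp.comp ?_) ?_) ?_
  · refine Continuous.sub (continuous_finset_sum _ fun j _ => ?_) ?_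
    · exact (continuous_const.mul ((hV (j : ℕ)).norm)).mul ((hT ((j : ℕ)+1)).sub (hT (j : ℕ)))
    · exact (continuous_const.mul ((hV n).norm)).mul (hT n)
  · exact continuous_finset_prod _ fun l _ => ((hV (l : ℕ)).inner (hA (l : ℕ))).abs
  · refine hφ.comp (Continuous.prodMk ?_ (hV n))
    refine Continuous.add (Continuous.add continuous_const
      (continuous_finset_sum _ fun m _ => ?_)) (Continuous.smul (hT n) (hV n))
    exact Continuous.smul ((hT (m : ℕ)).sub (hT ((m : ℕ)+1))) (hV (m : ℕ))

lemma adjoint_term_le (hd : 0 < d) (hr : r ∈ Set.Ioc (0:ℝ) 1) (hM : 0 ≤ M)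
    (hφ : Continuous φ) (hbound : ∀ z, |φ z| ≤ M) (ht : 0 ≤ t) (n : ℕ) :
    ∫⁻ q in adjointDomain d n t,
        ENNReal.ofReal |adjointIntegrand d n r φ t x v q| ∂ adjointMeasure d n
      ≤ ENNReal.ofReal (M * (dimConst d * ‖v‖) ^ n * t ^ n / n.factorial) := by
  set B : (Fin n → S) → ℝ≥0∞ := fun g => ∏ l : Fin n,
    ENNReal.ofReal |⟪forwardVelocity d r v (extendAngles d n g) (l : ℕ),
      extendAngles d n g (l : ℕ)⟫| with hB
  have hDmeas : MeasurableSet (adjointDomain d n t) :=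
    (measurableSet_collisionSimplex n t).prod MeasurableSet.univ
  have step1 : ∫⁻ q in adjointDomain d n t,
      ENNReal.ofReal |adjointIntegrand d n r φ t x v q| ∂ adjointMeasure d n
      ≤ ∫⁻ q in adjointDomain d n t, ENNReal.ofReal M * B q.2 ∂ adjointMeasure d n := by
    refine setLIntegral_mono' hDmeas fun q hq => ?_
    have h1 := abs_adjointIntegrand_le (v := v) (x := x) hr hM hbound ht n q hq
    calc ENNReal.ofReal |adjointIntegrand d n r φ t x v q|
        ≤ ENNReal.ofReal (M * ∏ l : Fin n,
          |⟪forwardVelocity d r v (extendAngles d n q.2) (l : ℕ),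
            extendAngles d n q.2 (l : ℕ)⟫|) := ENNReal.ofReal_le_ofReal h1
      _ = ENNReal.ofReal M * B q.2 := by
          rw [ENNReal.ofReal_mul hM, hB]
          congr 1
          exact ENNReal.ofReal_prod_of_nonneg fun i _ => abs_nonneg _
  have step2 : ∫⁻ q in adjointDomain d n t, ENNReal.ofReal M * B q.2 ∂ adjointMeasure d n
      = (ENNReal.ofReal M * (volume : Measure (Fin n → ℝ)) (collisionSimplex n t)) *
          ∫⁻ g, B g ∂ (Measure.pi fun _ : Fin n => sphereSurfaceMeasure d) := by
    rw [adjointMeasure, adjointDomain, ← Measure.prod_restrict, Measure.restrict_univ]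
    rw [lintegral_prod_mul (aemeasurable_const (b := ENNReal.ofReal M))
      (measurable_sphProd n).aemeasurable]
    rw [lintegral_const, Measure.restrict_apply_univ]
  rw [step2] at step1
  refine le_trans step1 ?_
  calc (ENNReal.ofReal M * (volume : Measure (Fin n → ℝ)) (collisionSimplex n t)) *
          ∫⁻ g, B g ∂ (Measure.pi fun _ : Fin n => sphereSurfaceMeasure d)
      ≤ (ENNReal.ofReal M * ENNReal.ofReal (t ^ n / n.factorial)) *
          (ENNReal.ofReal (dimConst d * ‖v‖)) ^ n := by
        refine mul_le_mul' (mul_le_mul' le_rfl (volume_collisionSimplex_le n ht)) ?_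
        exact sphere_prod_lintegral_le hd hr n
    _ = ENNReal.ofReal (M * (dimConst d * ‖v‖) ^ n * t ^ n / n.factorial) := by
        rw [← ENNReal.ofReal_pow (mul_nonneg dimConst_nonneg (norm_nonneg v)),
          ← ENNReal.ofReal_mul hM, ← ENNReal.ofReal_mul
            (mul_nonneg hM (div_nonneg (pow_nonneg ht n) (Nat.cast_nonneg _)))]
        congr 1
        ring

theorem adjoint_series_converges_and_bounded' (d : ℕ) (hd : 2 ≤ d) (r : ℝ)
    (hr : r ∈ Set.Ioc (0 : ℝ) 1) (M : ℝ) (hM : 0 ≤ M)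
    (φ : EuclideanSpace ℝ (Fin d) × EuclideanSpace ℝ (Fin d) → ℝ)
    (hcont : Continuous φ) (hbound : ∀ z, |φ z| ≤ M)
    (t : ℝ) (ht : 0 ≤ t) (x v : EuclideanSpace ℝ (Fin d)) :
    (∑' k : ℕ, ∫⁻ q in adjointDomain d (k + 1) t,
        ENNReal.ofReal |adjointIntegrand d (k + 1) r φ t x v q| ∂ adjointMeasure d (k + 1)) < ⊤ ∧
    |Real.exp (-(dimConst d) * ‖v‖ * t) * φ (x + t • v, v)
        + ∑' k : ℕ, ∫ q in adjointDomain d (k + 1) t,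
            adjointIntegrand d (k + 1) r φ t x v q ∂ adjointMeasure d (k + 1)|
      ≤ M * Real.exp (dimConst d * ‖v‖ * t) := by
  have hd0 : 0 < d := by omega
  set z : ℝ := dimConst d * ‖v‖ * t with hz
  have hznn : 0 ≤ z := mul_nonneg (mul_nonneg dimConst_nonneg (norm_nonneg v)) ht
  have hkey : ∀ n : ℕ, (∫⁻ q in adjointDomain d n t,
      ENNReal.ofReal |adjointIntegrand d n r φ t x v q| ∂ adjointMeasure d n)
      ≤ ENNReal.ofReal (M * (z ^ n / n.factorial)) := by
    intro n
    refine le_trans (adjoint_term_le hd0 hr hM hcont hbound ht n) (le_of_eq ?_)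
    congr 1
    rw [hz, mul_pow]
    ring
  set b : ℕ → ℝ := fun k => M * (z ^ (k+1) / (k+1).factorial) with hb
  have hbnn : ∀ k, 0 ≤ b k := fun k =>
    mul_nonneg hM (div_nonneg (pow_nonneg hznn _) (Nat.cast_nonneg _))
  have hzsum : Summable (fun k : ℕ => z ^ (k+1) / (k+1).factorial) := by
    have h3 := (Real.summable_pow_div_factorial z).comp_injective Nat.succ_injective
    exact h3
  have hbsum : Summable b := hzsum.mul_left M
  constructor
  · calc ∑' k : ℕ, ∫⁻ q in adjointDomain d (k + 1) t,
        ENNReal.ofReal |adjointIntegrand d (k + 1) r φ t x v q| ∂ adjointMeasure d (k + 1)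
        ≤ ∑' k : ℕ, ENNReal.ofReal (b k) := ENNReal.tsum_le_tsum fun k => hkey (k+1)
      _ = ENNReal.ofReal (∑' k, b k) := (ENNReal.ofReal_tsum_of_nonneg hbnn hbsum).symm
      _ < ⊤ := ENNReal.ofReal_lt_top
  · set I : ℕ → ℝ := fun k => ∫ q in adjointDomain d (k+1) t,
      adjointIntegrand d (k+1) r φ t x v q ∂ adjointMeasure d (k+1) with hI
    have hIb : ∀ k, |I k| ≤ b k := by
      intro k
      have h1 := norm_integral_le_lintegral_norm
        (μ := (adjointMeasure d (k+1)).restrict (adjointDomain d (k+1) t))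
        (adjointIntegrand d (k+1) r φ t x v)
      rw [Real.norm_eq_abs] at h1
      refine le_trans h1 ?_
      refine ENNReal.toReal_le_of_le_ofReal (hbnn k) ?_
      refine le_trans (le_of_eq ?_) (hkey (k+1))
      simp only [Real.norm_eq_abs]
    have hIsum : Summable I :=
      Summable.of_norm_bounded hbsum (fun k => by rw [Real.norm_eq_abs]; exact hIb k)
    have habs : |∑' k, I k| ≤ ∑' k, |I k| := by
      have h1 := norm_tsum_le_tsum_norm (f := I)
        (by simpa [Real.norm_eq_abs] using hIsum.abs)
      simpa [Real.norm_eq_abs] using h1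
    have htsum : |∑' k, I k| ≤ ∑' k, b k :=
      le_trans habs (Summable.tsum_le_tsum hIb hIsum.abs hbsum)
    have hsumb : ∑' k, b k ≤ M * (Real.exp z - 1) := by
      rw [hb, tsum_mul_left]
      refine mul_le_mul_of_nonneg_left ?_ hM
      refine Summable.tsum_le_of_sum_range_le hzsum ?_
      intro n
      have h1 : ∑ i ∈ Finset.range n, z ^ (i+1) / (i+1).factorial
          = (∑ i ∈ Finset.range (n+1), z ^ i / i.factorial) - 1 := by
        rw [Finset.sum_range_succ']
        simp
      rw [h1]
      have h2 := Real.sum_le_exp_of_nonneg hznn (n+1)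
      linarith
    have hfirst : |Real.exp (-(dimConst d) * ‖v‖ * t) * φ (x + t • v, v)| ≤ M := by
      rw [abs_mul, Real.abs_exp]
      have h1 : Real.exp (-(dimConst d) * ‖v‖ * t) ≤ 1 := by
        rw [Real.exp_le_one_iff]
        have h2 : -(dimConst d) * ‖v‖ * t = -z := by rw [hz]; ring
        rw [h2]
        exact neg_nonpos.2 hznn
      refine le_trans (mul_le_mul h1 (hbound _) (abs_nonneg _) zero_le_one) (by rw [one_mul])
    calc |Real.exp (-(dimConst d) * ‖v‖ * t) * φ (x + t • v, v) + ∑' k, I k|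
        ≤ |Real.exp (-(dimConst d) * ‖v‖ * t) * φ (x + t • v, v)| + |∑' k, I k| := abs_add_le _ _
      _ ≤ M + M * (Real.exp z - 1) := add_le_add hfirst (le_trans htsum hsumb)
      _ = M * Real.exp z := by ring

/-- The series representation `ψ` of the solution of the adjoint equation of the linear
inelastic Boltzmann equation converges absolutely, and `|ψ(t,x,v)| ≤ M·exp(C_d‖v‖t)` whenever
`|φ| ≤ M`. -/
theorem adjoint_series_converges_and_bounded (d : ℕ) (hd : 2 ≤ d) (r : ℝ)
    (hr : r ∈ Set.Ioc (0 : ℝ) 1) (M : ℝ) (hM : 0 ≤ M)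
    (φ : EuclideanSpace ℝ (Fin d) × EuclideanSpace ℝ (Fin d) → ℝ)
    (hcont : Continuous φ) (hbound : ∀ z, |φ z| ≤ M)
    (t : ℝ) (ht : 0 ≤ t) (x v : EuclideanSpace ℝ (Fin d)) :
    (∑' k : ℕ, ∫⁻ q in adjointDomain d (k + 1) t,
        ENNReal.ofReal |adjointIntegrand d (k + 1) r φ t x v q| ∂ adjointMeasure d (k + 1)) < ⊤ ∧
    |Real.exp (-(dimConst d) * ‖v‖ * t) * φ (x + t • v, v)
        + ∑' k : ℕ, ∫ q in adjointDomain d (k + 1) t,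
            adjointIntegrand d (k + 1) r φ t x v q ∂ adjointMeasure d (k + 1)|
      ≤ M * Real.exp (dimConst d * ‖v‖ * t) := by
  exact adjoint_series_converges_and_bounded' d hd r hr M hM φ hcont hbound t ht x v

end
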